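/- Let K be a nonarchimedean local field with absolute value |·| and residue field of cardinality q, let V = K^{⊕d} and V* = Hom_K(V, K), and let v_0,…,v_r ∈ V∖{0}. For (t_0,…,t_r) ∈ Δ_r and f ∈ V*, set s(v_0,…,v_r)(t_0,…,t_r)(f) = sup_{0≤i≤r} |f(v_i)|·q^{−1/t_i}, where q^{−1/t_i} is interpreted as 0 when t_i = 0. Then s(v_0,…,v_r)(t_0,…,t_r) is a semi-norm on V* for every (t_0,…,t_r) ∈ Δ_r, and the resulting map s(v_0,…,v_r) : Δ_r → S' is continuous. -/

import Mathlib

/-!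
STATEMENT 12: Let `K` be a nonarchimedean local field with absolute value `|·|`
(normalized so that all nonzero absolute values are integer powers of the residue
cardinality `q`), let `V = K^d`, `V* = Hom_K(V,K)`, and `v_0,…,v_r ∈ V∖{0}`.
For `(t_0,…,t_r) ∈ Δ_r` and `f ∈ V*` set
`s(v_0,…,v_r)(t)(f) = sup_i |f(v_i)|·q^{−1/t_i}` (with `q^{-1/t_i} = 0` if `t_i = 0`).
Then `s(v_0,…,v_r)(t)` is a semi-norm on `V*` for every `t ∈ Δ_r`, and the resulting
map `Δ_r → S'` (semi-norms with the topology of pointwise convergence) is continuous.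
-/

/-- The function `s(v_0,…,v_r)(t) : V* → ℝ` of the paper. -/
noncomputable def sFun {K : Type} [Field K] (abv : AbsoluteValue K ℝ) (q : ℕ)
    {d r : ℕ} (v : Fin (r + 1) → (Fin d → K)) (t : Fin (r + 1) → ℝ)
    (f : (Fin d → K) →ₗ[K] K) : ℝ :=
  Finset.univ.sup' ⟨0, Finset.mem_univ 0⟩ fun i : Fin (r + 1) =>
    abv (f (v i)) * (if t i = 0 then 0 else (q : ℝ) ^ (-1 / t i))

/-- The weight function `s ↦ q^{-1/s}` (with value `0` at `s = 0`). -/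
noncomputable def wFun (q : ℕ) (s : ℝ) : ℝ :=
  if s = 0 then 0 else (q : ℝ) ^ (-1 / s)

lemma wFun_nonneg (q : ℕ) (s : ℝ) : 0 ≤ wFun q s := by
  unfold wFun
  split
  · exact le_rfl
  · positivity

lemma wFun_continuousOn {q : ℕ} (hq : 1 < q) :
    ContinuousOn (wFun q) (Set.Ici (0 : ℝ)) := by
  intro x hx
  rcases eq_or_lt_of_le (Set.mem_Ici.mp hx) with h | h
  · -- x = 0
    subst h
    have h1 : Filter.Tendsto (fun s : ℝ => -1 / s) (nhdsWithin 0 (Set.Ioi 0)) Filter.atBot := by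
      have := (Filter.tendsto_neg_atTop_atBot).comp (tendsto_inv_nhdsGT_zero (𝕜 := ℝ))
      refine this.congr fun s => ?_
      simp [neg_div]
    have hq1 : (1 : ℝ) < (q : ℝ) := by exact_mod_cast hq
    have h0 : Filter.Tendsto (fun s : ℝ => (q : ℝ) ^ (-1 / s))
        (nhdsWithin 0 (Set.Ioi 0)) (nhds 0) :=
      (tendsto_rpow_atBot_of_base_gt_one _ hq1).comp h1
    have hIoi : Filter.Tendsto (wFun q) (nhdsWithin 0 (Set.Ioi 0)) (nhds 0) := by
      refine h0.congr' ?_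
      filter_upwards [self_mem_nhdsWithin] with s hs
      simp [wFun, (ne_of_gt (Set.mem_Ioi.mp hs))]
    have hset : Set.Ici (0 : ℝ) = {0} ∪ Set.Ioi 0 := by
      ext s; simp [le_iff_lt_or_eq, or_comm, eq_comm]
    unfold ContinuousWithinAt
    rw [hset, nhdsWithin_union]
    have hw0 : wFun q 0 = 0 := by simp [wFun]
    rw [hw0]
    rw [Filter.tendsto_sup]
    refine ⟨?_, hIoi⟩
    · rw [nhdsWithin_singleton]
      simpa [hw0] using tendsto_pure_nhds (wFun q) 0
  · -- x > 0
    refine ContinuousAt.continuousWithinAt ?_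
    have hg : ContinuousAt (fun s : ℝ => (q : ℝ) ^ (-1 / s)) x := by
      refine ContinuousAt.rpow continuousAt_const
        (continuousAt_const.div continuousAt_id (ne_of_gt h)) ?_
      left
      positivity
    refine hg.congr ?_
    filter_upwards [eventually_gt_nhds h] with s hs
    simp [wFun, ne_of_gt hs]

theorem statement12 (K : Type) [Field K] (abv : AbsoluteValue K ℝ)
    -- the absolute value is nonarchimedean …
    (habv : ∀ x y : K, abv (x + y) ≤ max (abv x) (abv y))
    -- … and discrete, with value group generated by the residue cardinality `q > 1`
    (q : ℕ) (hq : 1 < q)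
    (hdisc : ∀ x : K, x ≠ 0 → ∃ n : ℤ, abv x = (q : ℝ) ^ n)
    (d r : ℕ) (v : Fin (r + 1) → (Fin d → K)) (hv : ∀ i, v i ≠ 0) :
    -- (1) for every `t ∈ Δ_r`, `s(v_0,…,v_r)(t)` is a semi-norm on `V*`:
    (∀ t ∈ stdSimplex ℝ (Fin (r + 1)),
      (∀ f : (Fin d → K) →ₗ[K] K, 0 ≤ sFun abv q v t f) ∧
      (∀ (c : K) (f : (Fin d → K) →ₗ[K] K),
        sFun abv q v t (c • f) = abv c * sFun abv q v t f) ∧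
      (∀ f g : (Fin d → K) →ₗ[K] K,
        sFun abv q v t (f + g) ≤ max (sFun abv q v t f) (sFun abv q v t g)) ∧
      (∃ f : (Fin d → K) →ₗ[K] K, sFun abv q v t f ≠ 0)) ∧
    -- (2) the map `Δ_r → S'`, `t ↦ s(v_0,…,v_r)(t)`, is continuous for the topology
    -- of pointwise convergence on semi-norms (i.e. the product topology on `V* → ℝ`):
    Continuous (fun t : stdSimplex ℝ (Fin (r + 1)) =>
      (fun f : (Fin d → K) →ₗ[K] K => sFun abv q v t.1 f)) := by
  have hwnn : ∀ (t : Fin (r+1) → ℝ) (i : Fin (r+1)),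
      0 ≤ (if t i = 0 then 0 else (q : ℝ) ^ (-1 / t i)) := by
    intro t i
    split
    · exact le_refl 0
    · positivity
  constructor
  · intro t ht
    refine ⟨?_, ?_, ?_, ?_⟩
    · -- nonnegativity
      intro f
      refine le_trans ?_ (Finset.le_sup' _ (Finset.mem_univ (0 : Fin (r+1))))
      exact mul_nonneg (abv.nonneg _) (hwnn t 0)
    · -- homogeneity
      intro c f
      unfold sFun
      erw [Finset.comp_sup'_eq_sup'_comp _ (fun x : ℝ => abv c * x)
        (fun x y => by exact mul_max_of_nonneg _ _ (abv.nonneg c))]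
      congr 1
      funext i
      simp [mul_assoc, abv.map_mul]
    · -- ultrametric inequality
      intro f g
      unfold sFun
      refine Finset.sup'_le _ _ fun i _ => ?_
      have h1 : abv ((f + g) (v i)) ≤ max (abv (f (v i))) (abv (g (v i))) := by
        simpa using habv (f (v i)) (g (v i))
      calc abv ((f + g) (v i)) * (if t i = 0 then 0 else (q : ℝ) ^ (-1 / t i))
          ≤ max (abv (f (v i))) (abv (g (v i))) *
            (if t i = 0 then 0 else (q : ℝ) ^ (-1 / t i)) :=
            mul_le_mul_of_nonneg_right h1 (hwnn t i)
        _ = max (abv (f (v i)) * (if t i = 0 then 0 else (q : ℝ) ^ (-1 / t i)))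
            (abv (g (v i)) * (if t i = 0 then 0 else (q : ℝ) ^ (-1 / t i))) :=
            max_mul_of_nonneg _ _ (hwnn t i)
        _ ≤ max (Finset.univ.sup' ⟨0, Finset.mem_univ 0⟩ (fun i : Fin (r+1) =>
              abv (f (v i)) * (if t i = 0 then 0 else (q : ℝ) ^ (-1 / t i))))
            (Finset.univ.sup' ⟨0, Finset.mem_univ 0⟩ (fun i : Fin (r+1) =>
              abv (g (v i)) * (if t i = 0 then 0 else (q : ℝ) ^ (-1 / t i)))) :=
            max_le_max
              (Finset.le_sup' (fun i : Fin (r+1) =>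
                abv (f (v i)) * (if t i = 0 then 0 else (q : ℝ) ^ (-1 / t i)))
                (Finset.mem_univ i))
              (Finset.le_sup' (fun i : Fin (r+1) =>
                abv (g (v i)) * (if t i = 0 then 0 else (q : ℝ) ^ (-1 / t i)))
                (Finset.mem_univ i))
    · -- nontriviality
      obtain ⟨i, hi⟩ : ∃ i, t i ≠ 0 := by
        by_contra h
        push_neg at h
        have := ht.2
        simp [h] at this
      obtain ⟨j, hj⟩ : ∃ j, v i j ≠ 0 := by
        by_contra h
        push_neg at h
        exact hv i (funext h)
      refine ⟨LinearMap.proj j, ?_⟩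
      have hpos : 0 < abv (v i j) * (if t i = 0 then 0 else (q : ℝ) ^ (-1 / t i)) := by
        rw [if_neg hi]
        exact mul_pos (abv.pos hj) (Real.rpow_pos_of_pos (by positivity) _)
      have hle : abv ((LinearMap.proj j : (Fin d → K) →ₗ[K] K) (v i)) *
          (if t i = 0 then 0 else (q : ℝ) ^ (-1 / t i)) ≤
          sFun abv q v t (LinearMap.proj j) := by
        unfold sFun
        exact Finset.le_sup' (fun i : Fin (r+1) =>
          abv ((LinearMap.proj j : (Fin d → K) →ₗ[K] K) (v i)) *
            (if t i = 0 then 0 else (q : ℝ) ^ (-1 / t i))) (Finset.mem_univ i)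
      have : 0 < sFun abv q v t (LinearMap.proj j) := by
        refine lt_of_lt_of_le ?_ hle
        simpa using hpos
      exact ne_of_gt this
  · -- continuity
    refine continuous_pi fun f => ?_
    have : (fun t : stdSimplex ℝ (Fin (r + 1)) => sFun abv q v t.1 f) =
        fun t : stdSimplex ℝ (Fin (r + 1)) =>
          Finset.univ.sup' ⟨0, Finset.mem_univ 0⟩ fun i : Fin (r + 1) =>
            abv (f (v i)) * wFun q (t.1 i) := by
      funext t
      unfold sFun wFun
      rfl
    rw [this]
    refine Continuous.finset_sup'_apply _ fun i _ => ?_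
    refine continuous_const.mul ?_
    refine (wFun_continuousOn hq).comp_continuous ?_ ?_
    · exact (continuous_apply i).comp continuous_subtype_val
    · intro t
      exact t.2.1 i
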